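/- Let Y and A be finite nonempty sets, P : A × Y → ℝ a probability mass function, and L : A × Y → ℝ a loss function. Suppose P has a signal-based representation for L: there exist a finite set S, a probability mass function π : S × Y → ℝ, and a map α : S → A such that (1) ∑_{s} π(s,y) = ∑_{a} P(a,y) for every y; (2) for every s with π(s) := ∑_y π(s,y) > 0 and every a' ∈ A, ∑_{y} π(s,y)·L(α(s),y) ≤ ∑_{y} π(s,y)·L(a',y); and (3) P(a,y) = ∑_{s : α(s) = a} π(s,y) for every a, y. Then confidence scores are loss-calibrated to L: for every a, a' ∈ A, ∑_{y} P(a,y)L(a,y) ≤ ∑_{y} P(a,y)L(a',y). -/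
import Mathlib


open Finset
open scoped Classical

/-- If `P` has a signal-based representation for `L`, then confidence
scores are loss-calibrated to `L`. -/
theorem SBR_implies_loss_calibrated
    {A Y : Type} [Fintype A] [Fintype Y] [Nonempty A] [Nonempty Y]
    (P : A → Y → ℝ) (L : A → Y → ℝ)
    (hP_nonneg : ∀ a y, 0 ≤ P a y)
    (hP_sum : ∑ a : A, ∑ y : Y, P a y = 1)
    (S : Type) [Fintype S] (π : S → Y → ℝ) (α : S → A)
    -- π is a probability mass function
    (hπ_nonneg : ∀ s y, 0 ≤ π s y)
    (hπ_sum : ∑ s : S, ∑ y : Y, π s y = 1)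
    -- (1) the label-marginal of π matches that of P
    (hmarg : ∀ y : Y, ∑ s : S, π s y = ∑ a : A, P a y)
    -- (2) each realized signal's assigned score minimizes posterior expected loss
    (hopt : ∀ s : S, 0 < ∑ y : Y, π s y →
      ∀ a' : A, ∑ y : Y, π s y * L (α s) y ≤ ∑ y : Y, π s y * L a' y)
    -- (3) the induced joint distribution of scores and labels equals P
    (hjoint : ∀ (a : A) (y : Y), P a y = ∑ s : S, if α s = a then π s y else 0) :
    ∀ a a' : A, ∑ y : Y, P a y * L a y ≤ ∑ y : Y, P a y * L a' y := by
  intro a a'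
  have key : ∀ b : A, ∑ y : Y, P a y * L b y
      = ∑ s : S, (if α s = a then ∑ y : Y, π s y * L b y else 0) := by
    intro b
    calc ∑ y : Y, P a y * L b y
        = ∑ y : Y, (∑ s : S, if α s = a then π s y else 0) * L b y := by
          simp only [hjoint]
      _ = ∑ y : Y, ∑ s : S, (if α s = a then π s y * L b y else 0) := by
          refine Finset.sum_congr rfl fun y _ => ?_
          rw [Finset.sum_mul]
          exact Finset.sum_congr rfl fun s _ => by split <;> simp
      _ = ∑ s : S, (if α s = a then ∑ y : Y, π s y * L b y else 0) := by
          rw [Finset.sum_comm]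
          refine Finset.sum_congr rfl fun s _ => ?_
          split <;> simp
  rw [key a, key a']
  refine Finset.sum_le_sum fun s _ => ?_
  split
  · rename_i h
    rcases lt_or_eq_of_le (Finset.sum_nonneg fun y _ => hπ_nonneg s y) with hpos | hzero
    · have := hopt s hpos a'
      rwa [h] at this
    · have hz : ∀ y : Y, π s y = 0 := by
        intro y
        have := Finset.sum_eq_zero_iff_of_nonneg (fun y _ => hπ_nonneg s y) |>.mp hzero.symm
        exact this y (Finset.mem_univ y)
      simp [hz]
  · exact le_refl 0
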